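/- arXiv:1911.06665 — 2 statements merged into one kernel-verified Lean document; each statement's English description precedes it below -/
import Mathlib

section
/- With F₀ = [[𝐀, 0], [(𝐀̃ − I)C, 𝐀̃]] and B₀ = [I; 0] as above (𝐀 row stochastic ⊗ I_d, 𝐀̃ column stochastic ⊗ I_d), any row vector wᵀ satisfying wᵀ[F₀ − I, B₀] = 0 is a linear combination of the rows of [0, 𝟏ᵀ ⊗ I_d]; i.e., the left kernel of [F₀ − I, B₀] has dimension exactly d and is spanned by the rows of [0, 𝟏_Nᵀ ⊗ I_d]. -/
open Matrix Kronecker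

lemma kron_one_vecMul {N d : ℕ} (M : Matrix (Fin N) (Fin N) ℝ)
    (v : Fin N × Fin d → ℝ) (j : Fin N) (l : Fin d) :
    Matrix.vecMul v (M ⊗ₖ (1 : Matrix (Fin d) (Fin d) ℝ)) (j, l)
      = ∑ i, v (i, l) * M i j := by
  simp only [Matrix.vecMul, dotProduct, Fintype.sum_prod_type,
    Matrix.kroneckerMap_apply, Matrix.one_apply, mul_ite, mul_one, mul_zero]
  refine Finset.sum_congr rfl fun i _ => ?_
  simp [Finset.sum_ite_eq']

/-- With F₀ = [[A⊗I, 0],[(Ã⊗I − I)C, Ã⊗I]] and B₀ = [I; 0], where A is row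
stochastic with 1 a (left-)simple eigenvalue, Ã is column stochastic with 1 a
(left-)simple eigenvalue and C is invertible, a row vector w satisfies
w(F₀ − I) = 0 and wB₀ = 0 if and only if it is a linear combination of the
rows of [0, 𝟏ᵀ⊗I_d]; so the left kernel of [F₀ − I, B₀] has dimension d. -/
theorem stmt8 (N d : ℕ)
    (A Atil : Matrix (Fin N) (Fin N) ℝ)
    (hrow : ∀ i, ∑ j, A i j = 1)
    (hcol : ∀ j, ∑ i, Atil i j = 1)
    (hAsimple : ∀ v : Fin N → ℝ, Matrix.vecMul v A = v →
      ∃ c : ℝ, v = fun _ => c)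
    (hAtilsimple : ∀ v : Fin N → ℝ, Matrix.vecMul v Atil = v →
      ∃ c : ℝ, v = fun _ => c)
    (C : Matrix (Fin N × Fin d) (Fin N × Fin d) ℝ)
    (hC : IsUnit C)
    (bA bAtil : Matrix (Fin N × Fin d) (Fin N × Fin d) ℝ)
    (hbA : bA = A ⊗ₖ (1 : Matrix (Fin d) (Fin d) ℝ))
    (hbAtil : bAtil = Atil ⊗ₖ (1 : Matrix (Fin d) (Fin d) ℝ))
    (F₀ : Matrix ((Fin N × Fin d) ⊕ (Fin N × Fin d))
        ((Fin N × Fin d) ⊕ (Fin N × Fin d)) ℝ)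
    (hF₀ : F₀ = Matrix.fromBlocks bA 0 ((bAtil - 1) * C) bAtil)
    (B₀ : Matrix ((Fin N × Fin d) ⊕ (Fin N × Fin d)) (Fin N × Fin d) ℝ)
    (hB₀ : B₀ = Matrix.fromRows 1 0) :
    ∀ w : ((Fin N × Fin d) ⊕ (Fin N × Fin d)) → ℝ,
      (Matrix.vecMul w (F₀ - 1) = 0 ∧ Matrix.vecMul w B₀ = 0) ↔
      ∃ c : Fin d → ℝ, w = Sum.elim (0 : (Fin N × Fin d) → ℝ) (fun p => c p.2) := by
  subst hbA hbAtil hF₀ hB₀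
  intro w
  have hwsplit : w = Sum.elim (w ∘ Sum.inl) (w ∘ Sum.inr) := by
    funext x; cases x <;> rfl
  constructor
  · rintro ⟨h1, h2⟩
    -- First: w ∘ Sum.inl = 0 from wB₀ = 0
    have hw1 : w ∘ Sum.inl = 0 := by
      have := h2
      rw [hwsplit, Matrix.sumElim_vecMul_fromRows] at this
      simpa [Matrix.vecMul_one, Matrix.vecMul_zero] using this
    -- rewrite h1 as w F₀ = w
    have hF : Matrix.vecMul w
        (Matrix.fromBlocks (A ⊗ₖ (1 : Matrix (Fin d) (Fin d) ℝ)) 0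
          ((Atil ⊗ₖ (1 : Matrix (Fin d) (Fin d) ℝ) - 1) * C)
          (Atil ⊗ₖ (1 : Matrix (Fin d) (Fin d) ℝ))) = w := by
      have := h1
      rw [Matrix.vecMul_sub, Matrix.vecMul_one, sub_eq_zero] at this
      exact this
    rw [hwsplit, Matrix.vecMul_fromBlocks] at hF
    have hinr : Matrix.vecMul (w ∘ Sum.inr)
        (Atil ⊗ₖ (1 : Matrix (Fin d) (Fin d) ℝ)) = w ∘ Sum.inr := by
      have := congrArg (fun f => f ∘ Sum.inr) hF
      simpa [hw1, Matrix.vecMul_zero] using this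
    have heig : ∀ l : Fin d,
        Matrix.vecMul (fun i => w (Sum.inr (i, l))) Atil
          = fun i => w (Sum.inr (i, l)) := by
      intro l
      funext j
      have := congrFun hinr (j, l)
      rw [kron_one_vecMul] at this
      simpa [Matrix.vecMul, dotProduct] using this
    choose c hc using fun l => hAtilsimple _ (heig l)
    refine ⟨c, ?_⟩
    funext x
    cases x with
    | inl p => exact congrFun hw1 p
    | inr p =>
      have := congrFun (hc p.2) p.1
      simpa using this
  · rintro ⟨c, rfl⟩
    have hfix : Matrix.vecMul (fun p : Fin N × Fin d => c p.2)
        (Atil ⊗ₖ (1 : Matrix (Fin d) (Fin d) ℝ)) = fun p => c p.2 := by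
      funext p
      obtain ⟨j, l⟩ := p
      rw [kron_one_vecMul]
      simp only [← Finset.mul_sum, hcol j, mul_one]
    have hker : Matrix.vecMul (fun p : Fin N × Fin d => c p.2)
        ((Atil ⊗ₖ (1 : Matrix (Fin d) (Fin d) ℝ) - 1) * C) = 0 := by
      rw [← Matrix.vecMul_vecMul, Matrix.vecMul_sub, Matrix.vecMul_one, hfix,
        sub_self, Matrix.zero_vecMul]
    constructor
    · rw [Matrix.vecMul_sub, Matrix.vecMul_one, sub_eq_zero,
        Matrix.vecMul_fromBlocks]
      funext x
      cases x with
      | inl p =>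
        simp [hker, Matrix.vecMul_zero]
      | inr p =>
        have := congrFun hfix p
        simpa [Matrix.vecMul_zero] using this
    · rw [Matrix.sumElim_vecMul_fromRows]
      simp
end

section
/- Consider F = [[𝐀 + K_y C, K_z], [(𝐀̃ − I)C, 𝐀̃]] and G = [K_y Q; (𝐀̃ − I)Q] with K_z = K_y. Setting Π_x = 𝐈Σ and Π_z = −C𝐈Σ − Q, where Σ = (Σᵢ Cᵢ)⁻¹ Σᵢ CᵢΓᵢ, Q = col(−C₁Γ₁,...,−C_NΓ_N), C = diag(C₁,...,C_N), 𝐈 = 𝟏_N ⊗ I_d, the matrix Π = [Π_x; Π_z] satisfies the regulator equations Π = FΠ + G and [I, 0]Π = 𝐈Σ. -/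
open Matrix Kronecker

/-- With K_z = K_y, the matrix Pim = [𝐈Σ; −C𝐈Σ − Q] solves the regulator
equations Pim = FPim + G and [I, 0]Pim = 𝐈Σ for the gradient tracking closed loop
F = [[𝐀 + K_yC, K_z],[(𝐀̃ − I)C, 𝐀̃]], G = [K_yQ; (𝐀̃ − I)Q]. -/
theorem stmt9 (N d p : ℕ)
    (Cloc : Fin N → Matrix (Fin d) (Fin d) ℝ)
    (hCloc : ∀ i, (Cloc i).PosDef)
    (Γ : Fin N → Matrix (Fin d) (Fin p) ℝ)
    (A Atil : Matrix (Fin N) (Fin N) ℝ)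
    (hrow : ∀ i, ∑ j, A i j = 1)
    (hcol : ∀ j, ∑ i, Atil i j = 1)
    (bA bAtil : Matrix (Fin N × Fin d) (Fin N × Fin d) ℝ)
    (hbA : bA = A ⊗ₖ (1 : Matrix (Fin d) (Fin d) ℝ))
    (hbAtil : bAtil = Atil ⊗ₖ (1 : Matrix (Fin d) (Fin d) ℝ))
    (Ky Kz : Matrix (Fin N × Fin d) (Fin N × Fin d) ℝ)
    (hKzKy : Kz = Ky)
    (C : Matrix (Fin N × Fin d) (Fin N × Fin d) ℝ)
    (hC : C = Matrix.of fun q r => if q.1 = r.1 then Cloc q.1 q.2 r.2 else 0)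
    (Q : Matrix (Fin N × Fin d) (Fin p) ℝ)
    (hQ : Q = Matrix.of fun q c => (-(Cloc q.1 * Γ q.1)) q.2 c)
    (bI : Matrix (Fin N × Fin d) (Fin d) ℝ)
    (hbI : bI = Matrix.of fun q c => if q.2 = c then (1 : ℝ) else 0)
    (Sm : Matrix (Fin d) (Fin p) ℝ)
    (hSm : Sm = (∑ i, Cloc i)⁻¹ * ∑ i, Cloc i * Γ i)
    (F : Matrix ((Fin N × Fin d) ⊕ (Fin N × Fin d))
        ((Fin N × Fin d) ⊕ (Fin N × Fin d)) ℝ)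
    (hF : F = Matrix.fromBlocks (bA + Ky * C) Kz ((bAtil - 1) * C) bAtil)
    (G : Matrix ((Fin N × Fin d) ⊕ (Fin N × Fin d)) (Fin p) ℝ)
    (hG : G = Matrix.fromRows (Ky * Q) ((bAtil - 1) * Q))
    (Pim : Matrix ((Fin N × Fin d) ⊕ (Fin N × Fin d)) (Fin p) ℝ)
    (hPi : Pim = Matrix.fromRows (bI * Sm) (-(C * bI * Sm) - Q)) :
    Pim = F * Pim + G ∧ Matrix.fromCols 1 0 * Pim = bI * Sm := by

  have key : bA * bI = bI := by
    subst hbA hbI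
    ext ⟨i, a⟩ c
    simp only [Matrix.mul_apply, Matrix.kroneckerMap_apply, Matrix.of_apply,
      Fintype.sum_prod_type, Matrix.one_apply, mul_ite, mul_one, mul_zero,
      ite_and]
    simp only [Finset.sum_ite_eq', Finset.mem_univ, if_true]
    by_cases h : a = c <;> simp [h, hrow i]
  have hadd : ∀ (X Y Z W : Matrix (Fin N × Fin d) (Fin p) ℝ),
      Matrix.fromRows X Y + Matrix.fromRows Z W = Matrix.fromRows (X + Z) (Y + W) := by
    intro X Y Z W; ext (i | i) c <;> simp
  constructor
  · rw [hF, hG, hPi, hKzKy, Matrix.fromBlocks_mul_fromRows, hadd,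
      Matrix.fromRows_ext_iff]
    constructor
    · rw [Matrix.add_mul, Matrix.mul_sub, Matrix.mul_neg, ← Matrix.mul_assoc,
        ← Matrix.mul_assoc, ← Matrix.mul_assoc, key]
      simp only [Matrix.mul_assoc]
      abel
    · simp only [Matrix.sub_mul, Matrix.mul_sub, Matrix.mul_neg, Matrix.one_mul,
        Matrix.mul_assoc]
      abel
  · rw [hPi]
    have : Matrix.fromCols (1 : Matrix (Fin N × Fin d) (Fin N × Fin d) ℝ) 0 *
        Matrix.fromRows (bI * Sm) (-(C * bI * Sm) - Q) =
        (1 : Matrix (Fin N × Fin d) (Fin N × Fin d) ℝ) * (bI * Sm) +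
          (0 : Matrix (Fin N × Fin d) (Fin N × Fin d) ℝ) * (-(C * bI * Sm) - Q) :=
      Matrix.fromCols_mul_fromRows _ _ _ _
    rw [this]; simp
end
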